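/- Let $n$ be even and $b_0=\frac{\log 2}{4}\cdot\frac{n}{\log n}$. Then for all sufficiently large $n$, $\sum_{k=1}^{n/2} \binom{n/2}{k}\binom{n/2}{n/2-k+1} 2^{-k(n/2-k+1)/b_0} < 1$. -/

import Mathlib

open Real Finset

private lemma pow_self_le_exp (k : ℕ) :
    (k : ℝ) ^ k ≤ Real.exp 1 ^ k * (Nat.factorial k : ℝ) := by
  induction k with
  | zero => simp
  | succ k ih =>
    rcases Nat.eq_zero_or_pos k with rfl | hk
    · simpa using Real.one_le_exp (by norm_num : (0:ℝ) ≤ 1)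
    · have hk0 : (0:ℝ) < k := by exact_mod_cast hk
      have h1 : ((k:ℝ) + 1) ≤ k * Real.exp (1 / k) := by
        have := Real.add_one_le_exp (1 / (k:ℝ))
        calc ((k:ℝ) + 1) = k * (1 / k + 1) := by field_simp; ring
          _ ≤ k * Real.exp (1 / k) := by nlinarith
      have h2 : ((k:ℝ) + 1) ^ k ≤ (k * Real.exp (1 / k)) ^ k :=
        pow_le_pow_left₀ (by positivity) h1 k
      have h3 : (k * Real.exp (1 / k)) ^ k = (k:ℝ) ^ k * Real.exp 1 := by
        rw [mul_pow, ← Real.exp_nat_mul]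
        congr 2
        field_simp
      have hfac : ((Nat.factorial (k+1) : ℕ) : ℝ) = ((k:ℝ)+1) * Nat.factorial k := by
        rw [Nat.factorial_succ]; push_cast; ring
      have : ((k:ℝ) + 1) ^ (k+1) = ((k:ℝ)+1) * ((k:ℝ)+1) ^ k := by ring
      push_cast
      rw [this, hfac]
      calc ((k:ℝ)+1) * ((k:ℝ)+1) ^ k ≤ ((k:ℝ)+1) * ((k:ℝ) ^ k * Real.exp 1) := by
            have h4 := h2.trans_eq h3
            have : (0:ℝ) ≤ (k:ℝ)+1 := by positivity
            exact mul_le_mul_of_nonneg_left h4 this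
        _ ≤ ((k:ℝ)+1) * (Real.exp 1 ^ k * Nat.factorial k * Real.exp 1) := by
            have : (0:ℝ) < Real.exp 1 := Real.exp_pos 1
            have h5 : (k:ℝ) ^ k * Real.exp 1 ≤ Real.exp 1 ^ k * Nat.factorial k * Real.exp 1 :=
              mul_le_mul_of_nonneg_right ih (le_of_lt this)
            exact mul_le_mul_of_nonneg_left h5 (by positivity)
        _ = Real.exp 1 ^ (k+1) * (((k:ℝ)+1) * Nat.factorial k) := by ring

private lemma choose_le_epow (m k : ℕ) (hk : 1 ≤ k) :
    (m.choose k : ℝ) ≤ (Real.exp 1 * m / k) ^ k := by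
  have hk0 : (0:ℝ) < k := by exact_mod_cast hk
  have h1 : (m.choose k : ℝ) ≤ (m:ℝ) ^ k / Nat.factorial k := by
    have := Nat.choose_le_pow_div (α := ℝ) k m
    push_cast at this ⊢
    exact this
  have h2 := pow_self_le_exp k
  have hfac : (0:ℝ) < Nat.factorial k := by exact_mod_cast k.factorial_pos
  have h3 : (Real.exp 1 * m / k) ^ k = Real.exp 1 ^ k * (m:ℝ) ^ k / (k:ℝ) ^ k := by
    rw [div_pow, mul_pow]
  rw [h3]
  refine h1.trans ?_
  rw [div_le_div_iff₀ hfac (by positivity)]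
  have hmk : (0:ℝ) ≤ (m:ℝ) ^ k := by positivity
  nlinarith [mul_le_mul_of_nonneg_left h2 hmk]

set_option maxHeartbeats 2000000 in
private lemma core (m k : ℕ) (L : ℝ) (hm : 4 ≤ m) (hk1 : 1 ≤ k) (hk2 : 2*k ≤ m + 1)
    (hL1 : 1 ≤ L) (hexp : Real.exp L = 2*m) (hbig : 4096 * L^2 ≤ 2*m) :
    (m.choose k : ℝ) * (m.choose (m - k + 1) : ℝ) *
      Real.exp (-(2 * ((k * (m - k + 1) : ℕ) : ℝ) * L / m)) ≤ (1/4) * (1/2)^k := by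
  have hkm : k ≤ m := by omega
  have hm0 : (0:ℝ) < m := by
    have : (0:ℕ) < m := by omega
    exact_mod_cast this
  have hL0 : (0:ℝ) < L := by linarith
  have hkR : (1:ℝ) ≤ k := by exact_mod_cast hk1
  set r : ℕ := m - k + 1 with hr
  have hrc : (r : ℝ) = (m:ℝ) - k + 1 := by
    have : (r : ℕ) = m - k + 1 := rfl
    rw [this]; push_cast [Nat.cast_sub hkm]
    ring
  have hA : ((k * r : ℕ) : ℝ) = (k:ℝ) * ((m:ℝ) - k + 1) := by
    push_cast [Nat.cast_sub hkm]; rw [hrc]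
  have hrsym : m.choose r = m.choose (k-1) := by
    rw [show r = m - (k-1) by omega]
    exact Nat.choose_symm (by omega)
  have hchoose_pos : (0:ℝ) ≤ (m.choose k : ℝ) * (m.choose r : ℝ) := by positivity
  by_cases hcase : 4 * L * (k:ℝ) ≤ (m:ℝ)
  · -- small k
    have b1 : (m.choose k : ℝ) ≤ (m:ℝ)^k := by exact_mod_cast Nat.choose_le_pow m k
    have b2 : (m.choose r : ℝ) ≤ (m:ℝ)^(k-1) := by
      rw [hrsym]; exact_mod_cast Nat.choose_le_pow m (k-1)
    have b3 : Real.exp (-(2 * ((k * r : ℕ) : ℝ) * L / m)) ≤ Real.exp (1/2 - 2*L) ^ k := by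
      rw [← Real.exp_nat_mul]
      apply Real.exp_le_exp.mpr
      rw [hA]
      have hdiv : (k:ℝ) * (2*L - 1/2) ≤ 2 * ((k:ℝ) * ((m:ℝ) - k + 1)) * L / m := by
        rw [le_div_iff₀ hm0]
        nlinarith [mul_le_mul_of_nonneg_left hcase (by linarith : (0:ℝ) ≤ (k:ℝ) - 1)]
      have : ((k:ℕ):ℝ) * (1/2 - 2*L) = -((k:ℝ) * (2*L - 1/2)) := by push_cast; ring
      rw [this]
      linarith
    have hhalf : Real.exp (1/2 - 2*L) ≤ 2 / (2*(m:ℝ))^2 := by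
      have h1 : Real.exp (1/2 - 2*L) = Real.exp (1/2) / (2*(m:ℝ))^2 := by
        rw [Real.exp_sub]
        congr 1
        rw [show (2:ℝ)*L = L + L by ring, Real.exp_add, hexp]
        ring
      rw [h1]
      have h2 : Real.exp (1/2) ≤ 2 := by
        nlinarith [Real.exp_one_lt_d9, Real.exp_pos (1/2),
          (Real.exp_add (1/2) (1/2)).symm, Real.exp_pos 1]
      gcongr
    have hne : (m:ℝ) ≠ 0 := ne_of_gt hm0
    have halg : (m:ℝ)^k * (m:ℝ)^(k-1) * (2/(2*(m:ℝ))^2)^k * m = (1/2:ℝ)^k := by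
      have h1 : (m:ℝ)^(k-1) * m = (m:ℝ)^k := by
        rw [← pow_succ]; congr 1; omega
      calc (m:ℝ)^k * (m:ℝ)^(k-1) * (2/(2*(m:ℝ))^2)^k * m
          = (m:ℝ)^k * ((m:ℝ)^(k-1) * m) * (2/(2*(m:ℝ))^2)^k := by ring
        _ = (m:ℝ)^k * (m:ℝ)^k * (2/(2*(m:ℝ))^2)^k := by rw [h1]
        _ = ((m:ℝ) * ((m:ℝ) * (2/(2*(m:ℝ))^2)))^k := by rw [mul_pow, mul_pow]; ring
        _ = (1/2:ℝ)^k := by congr 1; field_simp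
    calc (m.choose k : ℝ) * (m.choose r : ℝ) * Real.exp (-(2 * ((k * r : ℕ) : ℝ) * L / m))
        ≤ (m:ℝ)^k * (m:ℝ)^(k-1) * (2/(2*(m:ℝ))^2)^k := by
          have e1 : Real.exp (-(2 * ((k * r : ℕ) : ℝ) * L / m)) ≤ (2/(2*(m:ℝ))^2)^k :=
            b3.trans (pow_le_pow_left₀ (Real.exp_pos _).le hhalf k)
          have e0 : (0:ℝ) ≤ (2/(2*(m:ℝ))^2)^k := by positivity
          exact mul_le_mul (mul_le_mul b1 b2 (by positivity) (by positivity)) e1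
            (Real.exp_pos _).le (by positivity)
      _ = (1/2:ℝ)^k / m := by
          rw [eq_div_iff hne, halg]
      _ ≤ (1/4) * (1/2:ℝ)^k := by
          rw [div_le_iff₀ hm0]
          have hm4 : (4:ℝ) ≤ m := by exact_mod_cast hm
          nlinarith [pow_pos (by norm_num : (0:ℝ) < 1/2) k]
  · push_neg at hcase
    have hk2' : 2 ≤ k := by
      by_contra h
      have hk1' : k = 1 := by omega
      rw [hk1'] at hcase
      push_cast at hcase
      nlinarith
    have hkR2 : (2:ℝ) ≤ (k:ℝ) := by exact_mod_cast hk2'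
    have he1 : (1:ℝ) ≤ Real.exp 1 := Real.one_le_exp (by norm_num)
    have he2 : Real.exp 1 ≤ 2.7182818286 := le_of_lt Real.exp_one_lt_d9
    have hkR0 : (0:ℝ) < (k:ℝ) := by linarith
    have hem := mul_le_mul_of_nonneg_left hcase.le (Real.exp_pos 1).le
    have b1 : (m.choose k : ℝ) ≤ (4 * Real.exp 1 * L)^k := by
      refine (choose_le_epow m k hk1).trans ?_
      have hb : Real.exp 1 * m / (k:ℝ) ≤ 4 * Real.exp 1 * L := by
        rw [div_le_iff₀ hkR0]
        nlinarith [hem]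
      exact pow_le_pow_left₀ (by positivity) hb k
    have b2 : (m.choose r : ℝ) ≤ (8 * Real.exp 1 * L)^k := by
      rw [hrsym]
      have hb : (m.choose (k-1) : ℝ) ≤ (Real.exp 1 * m / ((k-1:ℕ):ℝ))^(k-1) :=
        choose_le_epow m (k-1) (by omega)
      have hcast : ((k-1:ℕ):ℝ) = (k:ℝ) - 1 := by
        push_cast [Nat.cast_sub hk1]; ring
      have hbound : Real.exp 1 * m / ((k-1:ℕ):ℝ) ≤ 8 * Real.exp 1 * L := by
        rw [hcast, div_le_iff₀ (by linarith : (0:ℝ) < (k:ℝ) - 1)]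
        nlinarith [mul_nonneg (mul_nonneg (Real.exp_pos 1).le hL0.le)
          (by linarith : (0:ℝ) ≤ (k:ℝ) - 2)]
      refine hb.trans ?_
      have hge : (0:ℝ) ≤ Real.exp 1 * m / ((k-1:ℕ):ℝ) := by
        rw [hcast]
        apply div_nonneg (by positivity)
        linarith
      have hone : (1:ℝ) ≤ 8 * Real.exp 1 * L := by nlinarith
      calc (Real.exp 1 * m / ((k-1:ℕ):ℝ))^(k-1) ≤ (8 * Real.exp 1 * L)^(k-1) :=
            pow_le_pow_left₀ hge hbound _
        _ ≤ (8 * Real.exp 1 * L)^k :=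
            pow_le_pow_right₀ hone (by omega)
    have b3 : Real.exp (-(2 * ((k * r : ℕ) : ℝ) * L / m)) ≤ (1/(2*(m:ℝ)))^k := by
      have hxp : Real.exp (-L) = 1/(2*(m:ℝ)) := by
        rw [Real.exp_neg, hexp, one_div]
      rw [← hxp, ← Real.exp_nat_mul]
      apply Real.exp_le_exp.mpr
      rw [hA]
      have hdiv : (k:ℝ) * L ≤ 2 * ((k:ℝ) * ((m:ℝ) - k + 1)) * L / m := by
        rw [le_div_iff₀ hm0]
        have h2r : (m:ℝ) ≤ 2 * ((m:ℝ) - k + 1) := by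
          have : (2*k:ℝ) ≤ (m:ℝ) + 1 := by exact_mod_cast hk2
          linarith
        nlinarith
      linarith [hdiv]
    calc (m.choose k : ℝ) * (m.choose r : ℝ) * Real.exp (-(2 * ((k * r : ℕ) : ℝ) * L / m))
        ≤ (4 * Real.exp 1 * L)^k * (8 * Real.exp 1 * L)^k * (1/(2*(m:ℝ)))^k := by
          exact mul_le_mul (mul_le_mul b1 b2 (by positivity) (by positivity)) b3
            (Real.exp_pos _).le (by positivity)
      _ = ((4 * Real.exp 1 * L) * (8 * Real.exp 1 * L) * (1/(2*(m:ℝ))))^k := by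
          rw [← mul_pow, ← mul_pow]
      _ ≤ (1/16:ℝ)^k := by
          have hee : Real.exp 1 * Real.exp 1 ≤ 7.39 := by nlinarith
          apply pow_le_pow_left₀ (by positivity) ?_ k
          rw [mul_one_div, div_le_iff₀ (by positivity : (0:ℝ) < 2*(m:ℝ))]
          nlinarith [mul_le_mul_of_nonneg_right hee (sq_nonneg L), hbig]
      _ ≤ (1/4) * (1/2:ℝ)^k := by
          have h16 : (1/16:ℝ)^k = (1/8:ℝ)^k * (1/2:ℝ)^k := by
            rw [← mul_pow]; norm_num
          rw [h16]
          have h8 : (1/8:ℝ)^k ≤ 1/4 := by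
            calc (1/8:ℝ)^k ≤ (1/8:ℝ)^1 :=
                pow_le_pow_of_le_one (by norm_num) (by norm_num) hk1
              _ ≤ 1/4 := by norm_num
          exact mul_le_mul_of_nonneg_right h8 (by positivity)

theorem stmt14 :
    ∃ N : ℕ, ∀ n ≥ N, Even n →
      ∑ k ∈ Finset.Icc 1 (n / 2),
        ((n / 2).choose k : ℝ) * ((n / 2).choose (n / 2 - k + 1) : ℝ) *
          (2 : ℝ) ^ (-((k * (n / 2 - k + 1) : ℕ) : ℝ) /
            (Real.log 2 / 4 * ((n : ℝ) / Real.log n))) < 1 := by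
  refine ⟨2^32, fun n hn hev => ?_⟩
  obtain ⟨t, rfl⟩ := hev
  have hdiv : (t + t) / 2 = t := by omega
  rw [hdiv]
  have ht4 : 4 ≤ t := by omega
  have htR : (0:ℝ) < t := by
    have : (0:ℕ) < t := by omega
    exact_mod_cast this
  have hcast : ((t + t : ℕ) : ℝ) = 2 * t := by push_cast; ring
  set L := Real.log ((t + t : ℕ) : ℝ) with hLdef
  have hexp : Real.exp L = 2 * (t:ℝ) := by
    rw [hLdef, Real.exp_log (by positivity), hcast]
  have hL1 : 1 ≤ L := by
    rw [hLdef, hcast]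
    rw [Real.le_log_iff_exp_le (by positivity)]
    have := Real.exp_one_lt_d9
    have ht8 : (8:ℝ) ≤ 2 * (t:ℝ) := by
      have : (4:ℝ) ≤ t := by exact_mod_cast ht4
      linarith
    linarith
  have hL0 : (0:ℝ) < L := by linarith
  have hbig : 4096 * L^2 ≤ 2 * (t:ℝ) := by
    set x := Real.sqrt (2 * (t:ℝ)) with hxdef
    set y := Real.sqrt x with hydef
    have hx0 : (0:ℝ) < x := Real.sqrt_pos.mpr (by positivity)
    have hy0 : (0:ℝ) < y := Real.sqrt_pos.mpr hx0
    have hx2 : x^2 = 2 * (t:ℝ) := Real.sq_sqrt (by positivity)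
    have hy2 : y^2 = x := Real.sq_sqrt hx0.le
    have hxbig : (65536:ℝ) ≤ x := by
      have h1 : ((65536:ℝ))^2 ≤ 2 * (t:ℝ) := by
        have : (2^32 : ℕ) ≤ t + t := hn
        have h2 : ((2^32 : ℕ):ℝ) ≤ ((t + t : ℕ):ℝ) := by exact_mod_cast this
        rw [hcast] at h2
        norm_num at h2 ⊢
        linarith
      calc (65536:ℝ) = Real.sqrt (65536^2) := (Real.sqrt_sq (by norm_num)).symm
        _ ≤ x := Real.sqrt_le_sqrt h1
    have hlog : L ≤ 4 * y := by
      have h1 : L = 4 * Real.log y := by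
        rw [hLdef, hcast, ← hx2, Real.log_pow, ← hy2, Real.log_pow]
        push_cast
        ring
      have h2 : Real.log y ≤ y - 1 := Real.log_le_sub_one_of_pos hy0
      linarith
    nlinarith [sq_nonneg y, sq_nonneg (y - 1)]
  have hpt : ∀ k ∈ Finset.Icc 1 t,
      ((t).choose k : ℝ) * ((t).choose (t - k + 1) : ℝ) *
        (2 : ℝ) ^ (-((k * (t - k + 1) : ℕ) : ℝ) /
          (Real.log 2 / 4 * (((t + t : ℕ) : ℝ) / L))) ≤
      (1/4) * ((1/2:ℝ)^k + (1/2:ℝ)^(t + 1 - k)) := by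
    intro k hk
    rw [Finset.mem_Icc] at hk
    have heq : (2:ℝ) ^ (-((k * (t - k + 1) : ℕ) : ℝ) /
          (Real.log 2 / 4 * (((t + t : ℕ) : ℝ) / L))) =
        Real.exp (-(2 * ((k * (t - k + 1) : ℕ) : ℝ) * L / t)) := by
      rw [Real.rpow_def_of_pos (by norm_num : (0:ℝ) < 2)]
      congr 1
      have hlog2 : Real.log 2 ≠ 0 := ne_of_gt (Real.log_pos (by norm_num))
      have hLne : L ≠ 0 := ne_of_gt hL0
      have htne : (t:ℝ) ≠ 0 := ne_of_gt htR
      rw [hcast]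
      field_simp
      ring
    rw [heq]
    have hp1 : (0:ℝ) ≤ (1/2:ℝ)^k := by positivity
    have hp2 : (0:ℝ) ≤ (1/2:ℝ)^(t + 1 - k) := by positivity
    by_cases h2 : 2 * k ≤ t + 1
    · have := core t k L ht4 hk.1 h2 hL1 hexp hbig
      linarith
    · have e1 : t - (t + 1 - k) + 1 = k := by omega
      have e2 : t - k + 1 = t + 1 - k := by omega
      have hcore := core t (t + 1 - k) L ht4 (by omega) (by omega) hL1 hexp hbig
      rw [e1] at hcore
      rw [e2, Nat.mul_comm k (t + 1 - k), mul_comm ((t.choose k : ℝ))]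
      linarith
  refine lt_of_le_of_lt (Finset.sum_le_sum hpt) ?_
  have hgeo : ∀ M : ℕ, ∑ k ∈ Finset.Icc 1 M, (1/2:ℝ)^k = 1 - (1/2)^M := by
    intro M
    induction M with
    | zero => simp
    | succ M ih =>
      rw [Finset.sum_Icc_succ_top (by omega), ih]
      ring
  have hrev : ∑ k ∈ Finset.Icc 1 t, (1/2:ℝ)^(t + 1 - k) =
      ∑ k ∈ Finset.Icc 1 t, (1/2:ℝ)^k := by
    refine Finset.sum_nbij' (fun k => t + 1 - k) (fun k => t + 1 - k) ?_ ?_ ?_ ?_ ?_ <;>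
      intro a ha <;> (try dsimp only) <;> simp only [Finset.mem_Icc] at * <;> first
        | omega
        | (congr 1; omega)
  calc ∑ k ∈ Finset.Icc 1 t, (1/4) * ((1/2:ℝ)^k + (1/2:ℝ)^(t + 1 - k))
      = (1/4) * ((∑ k ∈ Finset.Icc 1 t, (1/2:ℝ)^k) +
          ∑ k ∈ Finset.Icc 1 t, (1/2:ℝ)^(t + 1 - k)) := by
        rw [← Finset.mul_sum, Finset.sum_add_distrib]
    _ < 1 := by
        rw [hrev, hgeo]
        have : (0:ℝ) < (1/2:ℝ)^t := by positivity
        linarith
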